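/- For every oriented knot diagram, the quantity (2W + T)/2 is an odd integer, where W is the writhe (signed count of crossings) and T is the turning number (signed count of caps and cups with values ±1); equivalently, 2W + T ≡ 2 (mod 4). -/

import Mathlib

/-- Generators of the free braided monoidal category `CC`: the four caps/cups
and the positive/negative braidings. -/
inductive Gen : Type
  | capR | capL | cupR | cupL | pos | neg
deriving DecidableEq

/-- A diagram is a list of elementary slices; each slice is a generator applied
at a given horizontal position.  It is executed on a state consisting of the
list of currently open strand endpoints (orientation `true` = upward, together
with a connected-component label), the number of closed loops completed so far,
and a fresh-label counter. -/
def stepFn (g : Gen × ℕ) (st : List (Bool × ℕ) × ℕ × ℕ) :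
    Option (List (Bool × ℕ) × ℕ × ℕ) :=
  match g, st with
  | (Gen.capR, k), (s, l, n) =>
      if k ≤ s.length then
        some (s.take k ++ [(true, n), (false, n)] ++ s.drop k, l, n + 1)
      else none
  | (Gen.capL, k), (s, l, n) =>
      if k ≤ s.length then
        some (s.take k ++ [(false, n), (true, n)] ++ s.drop k, l, n + 1)
      else none
  | (Gen.cupR, k), (s, l, n) =>
      match s[k]?, s[k + 1]? with
      | some (false, i), some (true, j) =>
          let s' := s.take k ++ s.drop (k + 2)
          if i = j then some (s', l + 1, n)
          else some (s'.map fun p => if p.2 = j then (p.1, i) else p, l, n)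
      | _, _ => none
  | (Gen.cupL, k), (s, l, n) =>
      match s[k]?, s[k + 1]? with
      | some (true, i), some (false, j) =>
          let s' := s.take k ++ s.drop (k + 2)
          if i = j then some (s', l + 1, n)
          else some (s'.map fun p => if p.2 = j then (p.1, i) else p, l, n)
      | _, _ => none
  | (Gen.pos, k), (s, l, n) =>
      match s[k]?, s[k + 1]? with
      | some a, some b => some (s.take k ++ [b, a] ++ s.drop (k + 2), l, n)
      | _, _ => none
  | (Gen.neg, k), (s, l, n) =>
      match s[k]?, s[k + 1]? with
      | some a, some b => some (s.take k ++ [b, a] ++ s.drop (k + 2), l, n)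
      | _, _ => none

/-- Run a diagram from the empty state. -/
def run (d : List (Gen × ℕ)) : Option (List (Bool × ℕ) × ℕ × ℕ) :=
  d.foldlM (fun st g => stepFn g st) ([], 0, 0)

/-- The writhe: the signed count of crossings. -/
def W (d : List (Gen × ℕ)) : ℤ :=
  (d.map fun g => match g.1 with | Gen.pos => (1 : ℤ) | Gen.neg => -1 | _ => 0).sum

/-- The turning number: the signed count of caps and cups. -/
def T (d : List (Gen × ℕ)) : ℤ :=
  (d.map fun g => match g.1 with
    | Gen.capR => (1 : ℤ) | Gen.cupL => 1 | Gen.capL => -1 | Gen.cupR => -1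
    | _ => 0).sum

/-- A diagram is an (oriented) knot diagram when it runs to completion with no
open strands and exactly one closed loop (a single connected component). -/
def IsKnotDiagram (d : List (Gen × ℕ)) : Prop :=
  ∃ n, run d = some ([], 1, n)

/-! ### Auxiliary development -/

/-- The pairwise kernel: for equal labels ±1 according to the orientation of the
first endpoint, for distinct labels 2·[inversion]. -/
def K (x y : Bool × ℕ) : ZMod 4 :=
  if x.2 = y.2 then (if x.1 then 1 else 3) else (if y.2 < x.2 then 2 else 0)

/-- Pairwise sum of `K` over a list. -/
def ps : List (Bool × ℕ) → ZMod 4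
  | [] => 0
  | x :: xs => (xs.map (K x)).sum + ps xs

def colSum (t : Bool × ℕ) (l : List (Bool × ℕ)) : ZMod 4 := (l.map (fun x => K x t)).sum
def rowSum (t : Bool × ℕ) (l : List (Bool × ℕ)) : ZMod 4 := (l.map (K t)).sum
def cross (u v : List (Bool × ℕ)) : ZMod 4 := (u.map fun x => (v.map (K x)).sum).sum

lemma sum_map_add {α : Type*} (f g : α → ZMod 4) (l : List α) :
    (l.map fun z => f z + g z).sum = (l.map f).sum + (l.map g).sum := by
  induction l with
  | nil => simp
  | cons a l ih => simp [ih]; ring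

lemma ps_append (u v : List (Bool × ℕ)) : ps (u ++ v) = ps u + ps v + cross u v := by
  induction u with
  | nil => simp [ps, cross]
  | cons a u ih =>
    simp only [List.cons_append, ps, ih, List.append_eq, List.map_append, List.sum_append,
      cross, List.map_cons, List.sum_cons]
    ring

lemma ps_mid1 (u v : List (Bool × ℕ)) (a : Bool × ℕ) :
    ps (u ++ [a] ++ v) = ps (u ++ v) + colSum a u + rowSum a v := by
  rw [List.append_assoc, ps_append, ps_append u v]
  simp only [List.singleton_append, ps, List.map_nil, List.sum_nil, add_zero, cross,
    List.map_cons, List.sum_cons, colSum, rowSum, List.nil_append, List.append_eq]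
  rw [sum_map_add]
  ring

lemma ps_mid2 (u v : List (Bool × ℕ)) (a b : Bool × ℕ) :
    ps (u ++ [a, b] ++ v) =
      ps (u ++ v) + K a b + colSum a u + colSum b u + rowSum a v + rowSum b v := by
  rw [List.append_assoc, ps_append, ps_append u v]
  simp only [List.cons_append, List.singleton_append, ps, List.map_nil, List.sum_nil,
    add_zero, cross, List.map_cons, List.sum_cons, colSum, rowSum, List.nil_append,
    List.append_eq]
  rw [sum_map_add, sum_map_add]
  ring

def sg (b : Bool) : ZMod 4 := if b then 1 else 3

def ee (i j : ℕ) : ZMod 4 := if j < i then 2 else 0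

def bet (b : Bool) (i j c : ℕ) : ZMod 4 :=
  if c = i ∨ c = j then ee i j - (if b then 1 else 3)
  else (if c < i then 2 else 0) + (if c < j then 2 else 0)

lemma B1 (b : Bool) (i j : ℕ) (hij : i ≠ j) (z : Bool × ℕ)
    (h1 : z.2 = i → z.1 = !b) (h2 : z.2 ≠ j) :
    K z (b, i) = bet b i j z.2 + K z (b, j) := by
  obtain ⟨zb, zc⟩ := z
  simp only at h1 h2
  by_cases hzi : zc = i
  · subst hzi; have := h1 rfl; subst this
    cases b <;> simp only [K, bet, ee, Bool.not_true, Bool.not_false, if_true, if_false] <;>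
      split_ifs <;> first | decide | omega | simp_all
  · cases b <;> cases zb <;>
      simp only [K, bet, ee, Bool.not_true, Bool.not_false, if_true, if_false] <;>
      split_ifs <;> first | decide | omega | simp_all

lemma B2 (b : Bool) (i j : ℕ) (hij : i ≠ j) (z : Bool × ℕ)
    (h1 : z.2 = i → z.1 = !b) (h2 : z.2 ≠ j) :
    K (b, i) z = bet b i j z.2 + K (b, j) z := by
  obtain ⟨zb, zc⟩ := z
  simp only at h1 h2
  by_cases hzi : zc = i
  · subst hzi; have := h1 rfl; subst this
    cases b <;> simp only [K, bet, ee, Bool.not_true, Bool.not_false, if_true, if_false] <;>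
      split_ifs <;> first | decide | omega | simp_all
  · cases b <;> cases zb <;>
      simp only [K, bet, ee, Bool.not_true, Bool.not_false, if_true, if_false] <;>
      split_ifs <;> first | decide | omega | simp_all

lemma B3 (b : Bool) (i j : ℕ) (hij : i ≠ j) (z : Bool × ℕ)
    (h1 : z.2 = i → z.1 = !b) (h2 : z.2 = j → z.1 = b) :
    K z (b, i) + K z (!b, j) = bet b i j z.2 := by
  obtain ⟨zb, zc⟩ := z
  simp only at h1 h2
  by_cases hzi : zc = i
  · subst hzi; have := h1 rfl; subst this
    cases b <;> simp only [K, bet, ee, Bool.not_true, Bool.not_false, if_true, if_false] <;>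
      split_ifs <;> first | decide | omega | simp_all
  · by_cases hzj : zc = j
    · subst hzj; have := h2 rfl; subst this
      cases zb <;> simp only [K, bet, ee, Bool.not_true, Bool.not_false, if_true, if_false] <;>
        split_ifs <;> first | decide | omega | simp_all
    · cases b <;> cases zb <;>
        simp only [K, bet, ee, Bool.not_true, Bool.not_false, if_true, if_false] <;>
        split_ifs <;> first | decide | omega | simp_all

lemma B4 (b : Bool) (i j : ℕ) (hij : i ≠ j) (z : Bool × ℕ)
    (h1 : z.2 = i → z.1 = !b) (h2 : z.2 = j → z.1 = b) :
    K (b, i) z + K (!b, j) z = bet b i j z.2 := by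
  obtain ⟨zb, zc⟩ := z
  simp only at h1 h2
  by_cases hzi : zc = i
  · subst hzi; have := h1 rfl; subst this
    cases b <;> simp only [K, bet, ee, Bool.not_true, Bool.not_false, if_true, if_false] <;>
      split_ifs <;> first | decide | omega | simp_all
  · by_cases hzj : zc = j
    · subst hzj; have := h2 rfl; subst this
      cases zb <;> simp only [K, bet, ee, Bool.not_true, Bool.not_false, if_true, if_false] <;>
        split_ifs <;> first | decide | omega | simp_all
    · cases b <;> cases zb <;>
        simp only [K, bet, ee, Bool.not_true, Bool.not_false, if_true, if_false] <;>
        split_ifs <;> first | decide | omega | simp_all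

lemma K_swap (a c : Bool × ℕ) (h : a ≠ c) : K c a = K a c + 2 := by
  obtain ⟨ab, an⟩ := a; obtain ⟨cb, cn⟩ := c
  by_cases hn : an = cn
  · subst hn
    have : ab ≠ cb := fun e => h (by rw [e])
    cases ab <;> cases cb <;> simp_all [K] <;> decide
  · cases ab <;> cases cb <;>
      simp only [K, Bool.not_true, Bool.not_false, if_true, if_false] <;>
      split_ifs <;> first | decide | omega | simp_all

lemma cap_col (b : Bool) (n : ℕ) (z : Bool × ℕ) (h : z.2 < n) :
    K z (b, n) + K z (!b, n) = 0 := by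
  obtain ⟨zb, zc⟩ := z
  simp only at h
  cases b <;> cases zb <;>
    simp only [K, Bool.not_true, Bool.not_false, if_true, if_false] <;>
    split_ifs <;> first | decide | omega | simp_all

lemma cap_row (b : Bool) (n : ℕ) (z : Bool × ℕ) (h : z.2 < n) :
    K (b, n) z + K (!b, n) z = 0 := by
  obtain ⟨zb, zc⟩ := z
  simp only at h
  cases b <;> cases zb <;>
    simp only [K, Bool.not_true, Bool.not_false, if_true, if_false] <;>
    split_ifs <;> first | decide | omega | simp_all

lemma cup_col (b : Bool) (i : ℕ) (z : Bool × ℕ) (h : z.2 ≠ i) :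
    K z (b, i) + K z (!b, i) = 0 := by
  obtain ⟨zb, zc⟩ := z
  simp only at h
  cases b <;> cases zb <;>
    simp only [K, Bool.not_true, Bool.not_false, if_true, if_false] <;>
    split_ifs <;> first | decide | omega | simp_all

lemma cup_row (b : Bool) (i : ℕ) (z : Bool × ℕ) (h : z.2 ≠ i) :
    K (b, i) z + K (!b, i) z = 0 := by
  obtain ⟨zb, zc⟩ := z
  simp only at h
  cases b <;> cases zb <;>
    simp only [K, Bool.not_true, Bool.not_false, if_true, if_false] <;>
    split_ifs <;> first | decide | omega | simp_all

lemma K_pair (b : Bool) (i j : ℕ) (hij : i ≠ j) : K (b, i) (!b, j) = ee i j := by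
  cases b <;> simp only [K, ee, Bool.not_true, Bool.not_false, if_true, if_false] <;>
    split_ifs <;> first | rfl | decide | omega | simp_all

lemma K_same (b : Bool) (i : ℕ) : K (b, i) (!b, i) = sg b := by
  cases b <;> simp [K, sg]

lemma ee_ee (i j : ℕ) : ee i j + ee i j = 0 := by
  unfold ee; split_ifs <;> decide

lemma bet_j (b : Bool) (i j : ℕ) : bet b i j j = ee i j - sg b := by
  simp [bet, sg]

/-- count of the relabeling map -/
lemma count_map_rho (i j : ℕ) (hij : i ≠ j) (w : List (Bool × ℕ)) (x : Bool × ℕ) :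
    (w.map (fun p => if p.2 = j then (p.1, i) else p)).count x =
      if x.2 = i then w.count (x.1, i) + w.count (x.1, j)
      else if x.2 = j then 0
      else w.count x := by
  induction w with
  | nil => simp
  | cons z w ih =>
    obtain ⟨zb, zc⟩ := z; obtain ⟨xb, xc⟩ := x
    by_cases hz : zc = j
    · subst hz
      simp only [List.map_cons, if_pos rfl, List.count_cons, ih, beq_iff_eq, Prod.mk.injEq]
      split_ifs <;> simp_all <;> omega
    · simp only [List.map_cons, if_neg hz, List.count_cons, ih, beq_iff_eq, Prod.mk.injEq]
      split_ifs <;> simp_all <;> omega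

lemma decomp2 {s : List (Bool × ℕ)} {k : ℕ} {a b : Bool × ℕ}
    (h1 : s[k]? = some a) (h2 : s[k + 1]? = some b) :
    s = s.take k ++ [a, b] ++ s.drop (k + 2) := by
  obtain ⟨hk, ha⟩ := List.getElem?_eq_some_iff.mp h1
  obtain ⟨hk2, hb⟩ := List.getElem?_eq_some_iff.mp h2
  have e1 : s.drop k = a :: s.drop (k + 1) := by
    rw [List.drop_eq_getElem_cons hk]
    rw [ha]
  have e2 : s.drop (k + 1) = b :: s.drop (k + 2) := by
    rw [List.drop_eq_getElem_cons hk2]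
    rw [hb]
  conv_lhs => rw [← List.take_append_drop k s, e1, e2]
  simp

/-- The well-formedness invariant. -/
def Good (s : List (Bool × ℕ)) (n : ℕ) : Prop :=
  (∀ z ∈ s, z.2 < n) ∧ (∀ x : Bool × ℕ, s.count x ≤ 1) ∧
    (∀ j : ℕ, s.count (true, j) = s.count (false, j))

lemma Good.balance {s : List (Bool × ℕ)} {n : ℕ} (h : Good s n) (b : Bool) (c : ℕ) :
    s.count (b, c) = s.count (!b, c) := by
  cases b
  · exact (h.2.2 c).symm
  · exact h.2.2 c

/-! ### The four transition computations for `ps` -/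

lemma sum_zero {α : Type*} (f : α → ZMod 4) (l : List α) (h : ∀ z ∈ l, f z = 0) :
    (l.map f).sum = 0 := by
  apply List.sum_eq_zero
  intro x hx
  obtain ⟨z, hz, rfl⟩ := List.mem_map.mp hx
  exact h z hz

lemma ps_cap (b : Bool) (n : ℕ) (u v : List (Bool × ℕ)) (h : ∀ z ∈ u ++ v, z.2 < n) :
    ps (u ++ [(b, n), (!b, n)] ++ v) = ps (u ++ v) + sg b := by
  rw [ps_mid2, K_same]
  have hcol : colSum (b, n) u + colSum (!b, n) u = 0 := by
    rw [colSum, colSum, ← sum_map_add]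
    exact sum_zero _ u fun z hz => cap_col b n z (h z (List.mem_append_left _ hz))
  have hrow : rowSum (b, n) v + rowSum (!b, n) v = 0 := by
    rw [rowSum, rowSum, ← sum_map_add]
    exact sum_zero _ v fun z hz => cap_row b n z (h z (List.mem_append_right _ hz))
  linear_combination hcol + hrow

lemma ps_cup_same (b : Bool) (i : ℕ) (u v : List (Bool × ℕ)) (h : ∀ z ∈ u ++ v, z.2 ≠ i) :
    ps (u ++ [(b, i), (!b, i)] ++ v) = ps (u ++ v) + sg b := by
  rw [ps_mid2, K_same]
  have hcol : colSum (b, i) u + colSum (!b, i) u = 0 := by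
    rw [colSum, colSum, ← sum_map_add]
    exact sum_zero _ u fun z hz => cup_col b i z (h z (List.mem_append_left _ hz))
  have hrow : rowSum (b, i) v + rowSum (!b, i) v = 0 := by
    rw [rowSum, rowSum, ← sum_map_add]
    exact sum_zero _ v fun z hz => cup_row b i z (h z (List.mem_append_right _ hz))
  linear_combination hcol + hrow

lemma ps_swap (a c : Bool × ℕ) (u v : List (Bool × ℕ)) (h : a ≠ c) :
    ps (u ++ [c, a] ++ v) = ps (u ++ [a, c] ++ v) + 2 := by
  rw [ps_mid2, ps_mid2, K_swap a c h]
  ring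

def Sb (b : Bool) (i j : ℕ) (l : List (Bool × ℕ)) : ZMod 4 :=
  (l.map fun z => bet b i j z.2).sum

lemma ps_merge (b : Bool) (i j : ℕ) (hij : i ≠ j) (u v w1 w2 : List (Bool × ℕ))
    (hw : u ++ v = w1 ++ [(b, j)] ++ w2)
    (Hu : ∀ z ∈ u ++ v, (z.2 = i → z.1 = !b) ∧ (z.2 = j → z.1 = b))
    (H1 : ∀ z ∈ w1, z.2 ≠ j) (H2 : ∀ z ∈ w2, z.2 ≠ j) :
    ps (w1 ++ [(b, i)] ++ w2) = ps (u ++ [(b, i), (!b, j)] ++ v) + sg b := by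
  have Hw1 : ∀ z ∈ w1, (z.2 = i → z.1 = !b) := by
    intro z hz
    exact (Hu z (by rw [hw]; exact List.mem_append_left _ (List.mem_append_left _ hz))).1
  have Hw2 : ∀ z ∈ w2, (z.2 = i → z.1 = !b) := by
    intro z hz
    exact (Hu z (by rw [hw]; exact List.mem_append_right _ hz)).1
  have e1 : ps (u ++ [(b, i), (!b, j)] ++ v) =
      ps (u ++ v) + K (b, i) (!b, j) + (colSum (b, i) u + colSum (!b, j) u)
        + (rowSum (b, i) v + rowSum (!b, j) v) := by
    rw [ps_mid2]; ring
  have hcolu : colSum (b, i) u + colSum (!b, j) u = Sb b i j u := by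
    rw [colSum, colSum, ← sum_map_add, Sb]
    congr 1
    apply List.map_congr_left
    intro z hz
    have := Hu z (List.mem_append_left _ hz)
    exact B3 b i j hij z this.1 this.2
  have hrowv : rowSum (b, i) v + rowSum (!b, j) v = Sb b i j v := by
    rw [rowSum, rowSum, ← sum_map_add, Sb]
    congr 1
    apply List.map_congr_left
    intro z hz
    have := Hu z (List.mem_append_right _ hz)
    exact B4 b i j hij z this.1 this.2
  have e2 : ps (u ++ v) = ps (w1 ++ w2) + colSum (b, j) w1 + rowSum (b, j) w2 := by
    rw [hw, ps_mid1]
  have e3 : ps (w1 ++ [(b, i)] ++ w2) = ps (w1 ++ w2) + colSum (b, i) w1 + rowSum (b, i) w2 :=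
    ps_mid1 _ _ _
  have hcolw : colSum (b, i) w1 = Sb b i j w1 + colSum (b, j) w1 := by
    rw [colSum, colSum, Sb, ← sum_map_add]
    congr 1
    apply List.map_congr_left
    intro z hz
    exact B1 b i j hij z (Hw1 z hz) (H1 z hz)
  have hroww : rowSum (b, i) w2 = Sb b i j w2 + rowSum (b, j) w2 := by
    rw [rowSum, rowSum, Sb, ← sum_map_add]
    congr 1
    apply List.map_congr_left
    intro z hz
    exact B2 b i j hij z (Hw2 z hz) (H2 z hz)
  have hS : Sb b i j u + Sb b i j v = Sb b i j w1 + (ee i j - sg b) + Sb b i j w2 := by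
    have : Sb b i j (u ++ v) = Sb b i j (w1 ++ [(b, j)] ++ w2) := by rw [hw]
    simp only [Sb, List.map_append, List.sum_append, List.map_cons, List.map_nil,
      List.sum_cons, List.sum_nil] at this ⊢
    rw [← bet_j b i j]
    linear_combination this
  have hK : K (b, i) (!b, j) = ee i j := K_pair b i j hij
  have he : ee i j + ee i j = 0 := ee_ee i j
  rw [e3, hcolw, hroww]
  rw [e1, hcolu, hrowv, e2, hK]
  linear_combination -hS - he

/-! ### Good preservation -/

lemma count_two (x p q : Bool × ℕ) :
    ([p, q] : List (Bool × ℕ)).count x = (if p = x then 1 else 0) + (if q = x then 1 else 0) := by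
  simp only [List.count_cons, List.count_nil, beq_iff_eq]
  split_ifs <;> omega

lemma count_mid (x p q : Bool × ℕ) (u v : List (Bool × ℕ)) :
    (u ++ [p, q] ++ v).count x =
      (u ++ v).count x + ((if p = x then 1 else 0) + (if q = x then 1 else 0)) := by
  simp only [List.count_append, count_two]
  omega

lemma bool_dichotomy (a b : Bool) : a = b ∨ a = !b := by cases a <;> cases b <;> simp

lemma good_cap (b : Bool) (n : ℕ) (u v : List (Bool × ℕ)) (h : Good (u ++ v) n) :
    Good (u ++ [(b, n), (!b, n)] ++ v) (n + 1) := by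
  obtain ⟨hlab, hcnt, hbal⟩ := h
  refine ⟨?_, ?_, ?_⟩
  · intro z hz
    simp only [List.mem_append, List.mem_cons, List.mem_singleton] at hz
    rcases hz with (hz | hz) | hz
    · exact Nat.lt_succ_of_lt (hlab z (List.mem_append_left _ hz))
    · rcases hz with rfl | rfl | h' <;> first | exact absurd h' (by simp) | simp
    · exact Nat.lt_succ_of_lt (hlab z (List.mem_append_right _ hz))
  · intro x
    obtain ⟨xb, xc⟩ := x
    have hx := hcnt (xb, xc)
    rw [count_mid]
    by_cases hc : xc = n
    · have hnot : (xb, xc) ∉ u ++ v := fun hm => by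
        have := hlab _ hm
        simp only at this
        omega
      rw [List.count_eq_zero.mpr hnot]
      have hbb : ¬((b, n) = (xb, xc) ∧ (!b, n) = (xb, xc)) := by
        rintro ⟨h1, h2⟩
        rw [Prod.mk.injEq] at h1 h2
        obtain ⟨hb1, -⟩ := h1
        obtain ⟨hb2, -⟩ := h2
        rw [← hb1] at hb2
        cases b <;> simp at hb2
      split_ifs <;> first | omega | exact absurd (by constructor <;> assumption) hbb
    · have h1 : ¬((b, n) = (xb, xc)) := by simp [Prod.mk.injEq, Ne.symm hc]
      have h2 : ¬((!b, n) = (xb, xc)) := by simp [Prod.mk.injEq, Ne.symm hc]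
      rw [if_neg h1, if_neg h2]
      have : (u ++ v).count (xb, xc) ≤ (u ++ [(b, n), (!b, n)] ++ v).count (xb, xc) := by
        rw [count_mid]; omega
      omega
  · intro c
    rw [count_mid, count_mid]
    have hb := hbal c
    by_cases hc : c = n
    · rw [hc]
      have e1 : ((if (b, n) = (true, n) then 1 else 0) + (if (!b, n) = (true, n) then 1 else 0) : ℕ)
          = 1 := by cases b <;> simp
      have e2 : ((if (b, n) = (false, n) then 1 else 0) + (if (!b, n) = (false, n) then 1 else 0) : ℕ)
          = 1 := by cases b <;> simp
      rw [e1, e2]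
      have hnt : (true, n) ∉ u ++ v := fun hm => absurd (hlab _ hm) (by simp)
      have hnf : (false, n) ∉ u ++ v := fun hm => absurd (hlab _ hm) (by simp)
      rw [List.count_eq_zero.mpr hnt, List.count_eq_zero.mpr hnf]
    · have h1 : ¬((b, n) = (true, c)) := by simp [Prod.mk.injEq]; intro _; exact fun hc' => hc hc'.symm
      have h2 : ¬((!b, n) = (true, c)) := by simp [Prod.mk.injEq]; intro _; exact fun hc' => hc hc'.symm
      have h3 : ¬((b, n) = (false, c)) := by simp [Prod.mk.injEq]; intro _; exact fun hc' => hc hc'.symm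
      have h4 : ¬((!b, n) = (false, c)) := by simp [Prod.mk.injEq]; intro _; exact fun hc' => hc hc'.symm
      rw [if_neg h1, if_neg h2, if_neg h3, if_neg h4, hb]

lemma good_swap (a c : Bool × ℕ) (u v : List (Bool × ℕ)) (n : ℕ)
    (h : Good (u ++ [a, c] ++ v) n) : Good (u ++ [c, a] ++ v) n := by
  obtain ⟨hlab, hcnt, hbal⟩ := h
  refine ⟨?_, ?_, ?_⟩
  · intro z hz
    apply hlab
    simp only [List.mem_append, List.mem_cons, List.mem_singleton] at hz ⊢
    tauto
  · intro x
    have := hcnt x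
    rw [count_mid] at this ⊢
    omega
  · intro j
    have := hbal j
    rw [count_mid, count_mid] at this ⊢
    omega

lemma good_cup_same (b : Bool) (i : ℕ) (u v : List (Bool × ℕ)) (n : ℕ)
    (h : Good (u ++ [(b, i), (!b, i)] ++ v) n) : Good (u ++ v) n := by
  obtain ⟨hlab, hcnt, hbal⟩ := h
  refine ⟨?_, ?_, ?_⟩
  · intro z hz
    apply hlab
    simp only [List.mem_append, List.mem_cons, List.mem_singleton] at hz ⊢
    tauto
  · intro x
    have := hcnt x
    rw [count_mid] at this
    omega
  · intro c
    have := hbal c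
    rw [count_mid, count_mid] at this
    have e : ((if (b, i) = (true, c) then 1 else 0) + (if (!b, i) = (true, c) then 1 else 0) : ℕ)
        = (if (b, i) = (false, c) then 1 else 0) + (if (!b, i) = (false, c) then 1 else 0) := by
      by_cases hc : c = i
      · subst hc; cases b <;> simp
      · have h1 : ¬((b, i) = (true, c)) := by simp [Prod.mk.injEq]; intro _; exact fun hc' => hc hc'.symm
        have h2 : ¬((!b, i) = (true, c)) := by simp [Prod.mk.injEq]; intro _; exact fun hc' => hc hc'.symm
        have h3 : ¬((b, i) = (false, c)) := by simp [Prod.mk.injEq]; intro _; exact fun hc' => hc hc'.symm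
        have h4 : ¬((!b, i) = (false, c)) := by simp [Prod.mk.injEq]; intro _; exact fun hc' => hc hc'.symm
        rw [if_neg h1, if_neg h2, if_neg h3, if_neg h4]
    omega

lemma cup_same_notmem (b : Bool) (i : ℕ) (u v : List (Bool × ℕ)) (n : ℕ)
    (h : Good (u ++ [(b, i), (!b, i)] ++ v) n) : ∀ z ∈ u ++ v, z.2 ≠ i := by
  obtain ⟨hlab, hcnt, hbal⟩ := h
  intro z hz hzi
  obtain ⟨zb, zc⟩ := z
  simp only at hzi
  rw [hzi] at hz
  have h1 := hcnt (zb, i)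
  rw [count_mid] at h1
  have h2 : 1 ≤ (u ++ v).count (zb, i) := List.count_pos_iff.mpr hz
  have e : ((if (b, i) = (zb, i) then 1 else 0) + (if (!b, i) = (zb, i) then 1 else 0) : ℕ) = 1 := by
    cases b <;> cases zb <;> simp
  omega

lemma merge_counts (b : Bool) (i j n : ℕ) (hij : i ≠ j) (u v : List (Bool × ℕ))
    (h : Good (u ++ [(b, i), (!b, j)] ++ v) n) :
    (u ++ v).count (b, i) = 0 ∧ (u ++ v).count (!b, i) = 1 ∧
      (u ++ v).count (!b, j) = 0 ∧ (u ++ v).count (b, j) = 1 := by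
  obtain ⟨hlab, hcnt, hbal⟩ := h
  have c1 := hcnt (b, i)
  have c2 := hcnt (!b, i)
  have c3 := hcnt (!b, j)
  have c4 := hcnt (b, j)
  have b1 := Good.balance ⟨hlab, hcnt, hbal⟩ b i
  have b2 := Good.balance ⟨hlab, hcnt, hbal⟩ b j
  rw [count_mid] at c1 c2 c3 c4 b1 b2
  rw [count_mid] at b1 b2
  have e1 : ((b, i) : Bool × ℕ) = (b, i) := rfl
  have hbb : (b : Bool) ≠ !b := by cases b <;> simp
  have q1 : ((if (b, i) = (b, i) then 1 else 0) + (if (!b, j) = (b, i) then 1 else 0) : ℕ) = 1 := by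
    simp [Prod.mk.injEq, hbb.symm]
  have q2 : ((if (b, i) = (!b, i) then 1 else 0) + (if (!b, j) = (!b, i) then 1 else 0) : ℕ) = 0 := by
    simp [Prod.mk.injEq, hbb, Ne.symm hij, hij]
  have q3 : ((if (b, i) = (!b, j) then 1 else 0) + (if (!b, j) = (!b, j) then 1 else 0) : ℕ) = 1 := by
    simp [Prod.mk.injEq, hbb, hij]
  have q4 : ((if (b, i) = (b, j) then 1 else 0) + (if (!b, j) = (b, j) then 1 else 0) : ℕ) = 0 := by
    simp [Prod.mk.injEq, hbb.symm, hij]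
  rw [q1] at c1; rw [q2] at c2; rw [q3] at c3; rw [q4] at c4
  rw [q1, q2] at b1
  rw [q4, q3] at b2
  omega

lemma merge_elem (b : Bool) (i j : ℕ) (u v : List (Bool × ℕ))
    (hc1 : (u ++ v).count (b, i) = 0) (hc3 : (u ++ v).count (!b, j) = 0) :
    ∀ z ∈ u ++ v, (z.2 = i → z.1 = !b) ∧ (z.2 = j → z.1 = b) := by
  intro z hz
  obtain ⟨zb, zc⟩ := z
  constructor
  · intro hzi
    simp only at hzi
    rw [hzi] at hz
    rcases bool_dichotomy zb b with rfl | rfl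
    · exact absurd hz (List.count_eq_zero.mp hc1)
    · rfl
  · intro hzj
    simp only at hzj
    rw [hzj] at hz
    rcases bool_dichotomy zb b with rfl | rfl
    · rfl
    · exact absurd hz (List.count_eq_zero.mp hc3)

lemma merge_split (b : Bool) (i j : ℕ) (u v : List (Bool × ℕ))
    (hc1 : (u ++ v).count (b, i) = 0) (hc3 : (u ++ v).count (!b, j) = 0)
    (hc4 : (u ++ v).count (b, j) = 1) :
    ∃ w1 w2, u ++ v = w1 ++ [(b, j)] ++ w2 ∧ (∀ z ∈ w1, z.2 ≠ j) ∧ (∀ z ∈ w2, z.2 ≠ j) := by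
  have hmem : (b, j) ∈ u ++ v := List.count_pos_iff.mp (by omega)
  obtain ⟨w1, w2, hw⟩ := List.append_of_mem hmem
  have hw' : u ++ v = w1 ++ [(b, j)] ++ w2 := by rw [hw]; simp
  have hcnt : w1.count (b, j) = 0 ∧ w2.count (b, j) = 0 := by
    rw [hw'] at hc4
    simp [List.count_append] at hc4
    constructor <;> omega
  have helem := merge_elem b i j u v hc1 hc3
  refine ⟨w1, w2, hw', ?_, ?_⟩
  · intro z hz hzj
    have hmem' : z ∈ u ++ v := by rw [hw']; exact List.mem_append_left _ (List.mem_append_left _ hz)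
    have hzb := (helem z hmem').2 hzj
    obtain ⟨zb, zc⟩ := z
    simp only at hzb hzj
    rw [hzb, hzj] at hz
    exact absurd hz (List.count_eq_zero.mp hcnt.1)
  · intro z hz hzj
    have hmem' : z ∈ u ++ v := by rw [hw']; exact List.mem_append_right _ hz
    have hzb := (helem z hmem').2 hzj
    obtain ⟨zb, zc⟩ := z
    simp only at hzb hzj
    rw [hzb, hzj] at hz
    exact absurd hz (List.count_eq_zero.mp hcnt.2)

lemma good_merge (b : Bool) (i j n : ℕ) (hij : i ≠ j) (u v : List (Bool × ℕ))
    (h : Good (u ++ [(b, i), (!b, j)] ++ v) n) :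
    Good (((u ++ v).map fun p => if p.2 = j then (p.1, i) else p)) n := by
  obtain ⟨hc1, hc2, hc3, hc4⟩ := merge_counts b i j n hij u v h
  obtain ⟨hlab, hcnt, hbal⟩ := h
  have hin : i < n := by
    have : ((b, i) : Bool × ℕ) ∈ u ++ [(b, i), (!b, j)] ++ v := by simp
    simpa using hlab _ this
  refine ⟨?_, ?_, ?_⟩
  · intro z hz
    obtain ⟨p, hp, rfl⟩ := List.mem_map.mp hz
    have hpm : p ∈ u ++ [(b, i), (!b, j)] ++ v := by
      simp only [List.mem_append] at hp ⊢
      tauto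
    have := hlab p hpm
    by_cases hpj : p.2 = j <;> simp [hpj] <;> [exact hin; exact this]
  · intro x
    obtain ⟨xb, xc⟩ := x
    rw [count_map_rho i j hij]
    dsimp only
    have hle : (u ++ v).count (xb, xc) ≤ 1 := by
      have := hcnt (xb, xc)
      rw [count_mid] at this
      omega
    split_ifs with h1 h2
    · subst h1
      rcases bool_dichotomy xb b with rfl | rfl
      · omega
      · omega
    · omega
    · exact hle
  · intro c
    rw [count_map_rho i j hij, count_map_rho i j hij]
    dsimp only
    split_ifs with h1 h2
    · subst h1
      cases b
      · simp only [Bool.not_false] at hc2 hc3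
        omega
      · simp only [Bool.not_true] at hc2 hc3
        omega
    · rfl
    · have hb := hbal c
      rw [count_mid, count_mid] at hb
      have q1 : ¬((b, i) = (true, c)) := by simp [Prod.mk.injEq]; intro _ h'; exact h1 h'.symm
      have q2 : ¬((!b, j) = (true, c)) := by simp [Prod.mk.injEq]; intro _ h'; exact h2 h'.symm
      have q3 : ¬((b, i) = (false, c)) := by simp [Prod.mk.injEq]; intro _ h'; exact h1 h'.symm
      have q4 : ¬((!b, j) = (false, c)) := by simp [Prod.mk.injEq]; intro _ h'; exact h2 h'.symm
      rw [if_neg q1, if_neg q2, if_neg q3, if_neg q4] at hb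
      omega

/-! ### The step lemma -/

def dgen : Gen → ZMod 4
  | Gen.capR => 1 | Gen.capL => 3 | Gen.cupR => 3 | Gen.cupL => 1
  | Gen.pos => 2 | Gen.neg => 2

lemma h4 : (4 : ZMod 4) = 0 := by decide

lemma map_rho_eq (b : Bool) (i j : ℕ) (w1 w2 : List (Bool × ℕ))
    (H1 : ∀ z ∈ w1, z.2 ≠ j) (H2 : ∀ z ∈ w2, z.2 ≠ j) :
    ((w1 ++ [(b, j)] ++ w2).map fun p => if p.2 = j then (p.1, i) else p)
      = w1 ++ [(b, i)] ++ w2 := by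
  simp only [List.map_append, List.map_cons, List.map_nil]
  have e1 : (w1.map fun p => if p.2 = j then (p.1, i) else p) = w1 := by
    have e := List.map_congr_left (l := w1)
      (f := fun p : Bool × ℕ => if p.2 = j then (p.1, i) else p) (g := id)
      (fun z hz => by simp [H1 z hz])
    rw [e, List.map_id]
  have e2 : (w2.map fun p => if p.2 = j then (p.1, i) else p) = w2 := by
    have e := List.map_congr_left (l := w2)
      (f := fun p : Bool × ℕ => if p.2 = j then (p.1, i) else p) (g := id)
      (fun z hz => by simp [H2 z hz])
    rw [e, List.map_id]
  rw [e1, e2]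
  norm_num

lemma cup_core (b : Bool) (i j : ℕ) (hij : i ≠ j) (u v : List (Bool × ℕ)) (n : ℕ)
    (hG : Good (u ++ [(b, i), (!b, j)] ++ v) n) :
    Good (((u ++ v).map fun p => if p.2 = j then (p.1, i) else p)) n ∧
      ps ((u ++ v).map fun p => if p.2 = j then (p.1, i) else p)
        = ps (u ++ [(b, i), (!b, j)] ++ v) + sg b := by
  obtain ⟨hc1, hc2, hc3, hc4⟩ := merge_counts b i j n hij u v hG
  obtain ⟨w1, w2, hw, H1, H2⟩ := merge_split b i j u v hc1 hc3 hc4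
  have Hu := merge_elem b i j u v hc1 hc3
  have hmap : ((u ++ v).map fun p => if p.2 = j then (p.1, i) else p)
      = w1 ++ [(b, i)] ++ w2 := by
    rw [hw, map_rho_eq b i j w1 w2 H1 H2]
  refine ⟨good_merge b i j n hij u v hG, ?_⟩
  rw [hmap]
  exact ps_merge b i j hij u v w1 w2 hw Hu H1 H2

lemma step_main {g : Gen} {k : ℕ} {s : List (Bool × ℕ)} {l n : ℕ}
    {st' : List (Bool × ℕ) × ℕ × ℕ} (hG : Good s n)
    (h : stepFn (g, k) (s, l, n) = some st') :
    Good st'.1 st'.2.2 ∧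
      2 * (st'.2.1 : ZMod 4) + ps st'.1 = 2 * (l : ZMod 4) + ps s + dgen g := by
  cases g
  case capR =>
    simp only [stepFn] at h
    split at h
    · obtain rfl := Option.some.inj h
      have hG' : Good (s.take k ++ s.drop k) n := by rw [List.take_append_drop]; exact hG
      have hps := ps_cap true n (s.take k) (s.drop k) hG'.1
      have hgood := good_cap true n (s.take k) (s.drop k) hG'
      simp only [Bool.not_true] at hps hgood
      rw [List.take_append_drop] at hps
      exact ⟨hgood, by
        rw [hps, show sg true = 1 from rfl, show dgen Gen.capR = 1 from rfl]; ring⟩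
    · exact absurd h (by simp)
  case capL =>
    simp only [stepFn] at h
    split at h
    · obtain rfl := Option.some.inj h
      have hG' : Good (s.take k ++ s.drop k) n := by rw [List.take_append_drop]; exact hG
      have hps := ps_cap false n (s.take k) (s.drop k) hG'.1
      have hgood := good_cap false n (s.take k) (s.drop k) hG'
      simp only [Bool.not_false] at hps hgood
      rw [List.take_append_drop] at hps
      exact ⟨hgood, by
        rw [hps, show sg false = 3 from rfl, show dgen Gen.capL = 3 from rfl]; ring⟩
    · exact absurd h (by simp)
  case cupR =>
    simp only [stepFn] at h
    split at h
    · next i j heq1 heq2 =>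
        have hs := decomp2 heq1 heq2
        split at h
        · next hij =>
            subst hij
            obtain rfl := Option.some.inj h
            rw [hs] at hG
            have hG' : Good (s.take k ++ [(false, i), (!false, i)] ++ s.drop (k + 2)) n := by
              simpa using hG
            have hnm := cup_same_notmem false i (s.take k) (s.drop (k + 2)) n hG'
            have hps := ps_cup_same false i (s.take k) (s.drop (k + 2)) hnm
            have hgood := good_cup_same false i (s.take k) (s.drop (k + 2)) n hG'
            simp only [Bool.not_false] at hps
            refine ⟨hgood, ?_⟩
            dsimp only
            rw [← hs] at hps
            rw [hps, show sg false = 3 from rfl, show dgen Gen.cupR = 3 from rfl]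
            push_cast
            linear_combination (-1 : ZMod 4) * h4
        · next hij =>
            obtain rfl := Option.some.inj h
            rw [hs] at hG
            have hG' : Good (s.take k ++ [(false, i), (!false, j)] ++ s.drop (k + 2)) n := by
              simpa using hG
            obtain ⟨hgood, hps⟩ := cup_core false i j hij (s.take k) (s.drop (k + 2)) n hG'
            simp only [Bool.not_false] at hps
            refine ⟨hgood, ?_⟩
            dsimp only
            rw [← hs] at hps
            rw [hps, show sg false = 3 from rfl, show dgen Gen.cupR = 3 from rfl]
            ring
    · simp at h
  case cupL =>
    simp only [stepFn] at h
    split at h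
    · next i j heq1 heq2 =>
        have hs := decomp2 heq1 heq2
        split at h
        · next hij =>
            subst hij
            obtain rfl := Option.some.inj h
            rw [hs] at hG
            have hG' : Good (s.take k ++ [(true, i), (!true, i)] ++ s.drop (k + 2)) n := by
              simpa using hG
            have hnm := cup_same_notmem true i (s.take k) (s.drop (k + 2)) n hG'
            have hps := ps_cup_same true i (s.take k) (s.drop (k + 2)) hnm
            have hgood := good_cup_same true i (s.take k) (s.drop (k + 2)) n hG'
            simp only [Bool.not_true] at hps
            refine ⟨hgood, ?_⟩
            dsimp only
            rw [← hs] at hps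
            rw [hps, show sg true = 1 from rfl, show dgen Gen.cupL = 1 from rfl]
            push_cast
            ring
        · next hij =>
            obtain rfl := Option.some.inj h
            rw [hs] at hG
            have hG' : Good (s.take k ++ [(true, i), (!true, j)] ++ s.drop (k + 2)) n := by
              simpa using hG
            obtain ⟨hgood, hps⟩ := cup_core true i j hij (s.take k) (s.drop (k + 2)) n hG'
            simp only [Bool.not_true] at hps
            refine ⟨hgood, ?_⟩
            dsimp only
            rw [← hs] at hps
            rw [hps, show sg true = 1 from rfl, show dgen Gen.cupL = 1 from rfl]
            ring
    · simp at h
  case pos =>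
    simp only [stepFn] at h
    split at h
    · next a c heq1 heq2 =>
        have hs := decomp2 heq1 heq2
        obtain rfl := Option.some.inj h
        rw [hs] at hG
        have hac : a ≠ c := by
          intro hec
          subst hec
          have := hG.2.1 a
          rw [count_mid] at this
          simp at this
        refine ⟨good_swap a c (s.take k) (s.drop (k + 2)) n hG, ?_⟩
        dsimp only
        have hswap := ps_swap a c (s.take k) (s.drop (k + 2)) hac
        rw [← hs] at hswap
        rw [hswap, show dgen Gen.pos = 2 from rfl]
        ring
    · simp at h
  case neg =>
    simp only [stepFn] at h
    split at h
    · next a c heq1 heq2 =>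
        have hs := decomp2 heq1 heq2
        obtain rfl := Option.some.inj h
        rw [hs] at hG
        have hac : a ≠ c := by
          intro hec
          subst hec
          have := hG.2.1 a
          rw [count_mid] at this
          simp at this
        refine ⟨good_swap a c (s.take k) (s.drop (k + 2)) n hG, ?_⟩
        dsimp only
        have hswap := ps_swap a c (s.take k) (s.drop (k + 2)) hac
        rw [← hs] at hswap
        rw [hswap, show dgen Gen.neg = 2 from rfl]
        ring
    · simp at h

/-! ### Folding over the diagram -/

lemma run_aux (d : List (Gen × ℕ)) :
    ∀ (s : List (Bool × ℕ)) (l n : ℕ) (st' : List (Bool × ℕ) × ℕ × ℕ),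
      Good s n →
      List.foldlM (fun st g => stepFn g st) (s, l, n) d = some st' →
      Good st'.1 st'.2.2 ∧
        2 * (st'.2.1 : ZMod 4) + ps st'.1 =
          2 * (l : ZMod 4) + ps s + (d.map fun g => dgen g.1).sum := by
  induction d with
  | nil =>
    intro s l n st' hG h
    simp only [List.foldlM_nil] at h
    obtain rfl : ((s, l, n) : List (Bool × ℕ) × ℕ × ℕ) = st' := by simpa using h
    exact ⟨hG, by simp⟩
  | cons g d ih =>
    intro s l n st' hG h
    rw [List.foldlM_cons] at h
    cases hstep : stepFn g (s, l, n) with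
    | none => rw [hstep] at h; simp at h
    | some st1 =>
      rw [hstep] at h
      simp only [Option.bind_eq_bind, Option.bind_some] at h
      obtain ⟨s1, l1, n1⟩ := st1
      obtain ⟨gg, k⟩ := g
      have h1 := step_main hG hstep
      have h2 := ih s1 l1 n1 st' h1.1 h
      refine ⟨h2.1, ?_⟩
      rw [h2.2, h1.2]
      simp only [List.map_cons, List.sum_cons]
      ring

lemma WT_cast (d : List (Gen × ℕ)) :
    ((2 * W d + T d : ℤ) : ZMod 4) = (d.map fun g => dgen g.1).sum := by
  induction d with
  | nil => simp [W, T]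
  | cons g d ih =>
    have hW : W (g :: d) =
        (match g.1 with | Gen.pos => (1 : ℤ) | Gen.neg => -1 | _ => 0) + W d := by
      simp [W]
    have hT : T (g :: d) =
        (match g.1 with
          | Gen.capR => (1 : ℤ) | Gen.cupL => 1 | Gen.capL => -1 | Gen.cupR => -1
          | _ => 0) + T d := by
      simp [T]
    rw [hW, hT, List.map_cons, List.sum_cons, ← ih]
    obtain ⟨gg, k⟩ := g
    cases gg
    case capR => simp only [dgen]; push_cast; ring
    case capL => simp only [dgen]; push_cast; linear_combination (-1 : ZMod 4) * h4
    case cupR => simp only [dgen]; push_cast; linear_combination (-1 : ZMod 4) * h4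
    case cupL => simp only [dgen]; push_cast; ring
    case pos => simp only [dgen]; push_cast; ring
    case neg => simp only [dgen]; push_cast; linear_combination (-1 : ZMod 4) * h4

/-- For every oriented knot diagram, `2W + T ≡ 2 (mod 4)`;
equivalently `(2W + T)/2` is an odd integer. -/
theorem knot_writhe_turning_mod_four (d : List (Gen × ℕ)) (h : IsKnotDiagram d) :
    2 * W d + T d ≡ 2 [ZMOD 4] := by
  obtain ⟨n, hrun⟩ := h
  have hG0 : Good ([] : List (Bool × ℕ)) 0 := ⟨by simp, by simp, by simp⟩
  have hmain := run_aux d [] 0 0 ([], 1, n) hG0 hrun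
  have hsum : ((d.map fun g => dgen g.1).sum : ZMod 4) = 2 := by
    have := hmain.2
    simp only [ps, Nat.cast_one, Nat.cast_zero] at this
    linear_combination (-1 : ZMod 4) * this
  have hc : ((2 * W d + T d : ℤ) : ZMod 4) = ((2 : ℤ) : ZMod 4) := by
    rw [WT_cast, hsum]; norm_num
  have := (ZMod.intCast_eq_intCast_iff (2 * W d + T d) 2 4).mp hc
  simpa using this
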